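/- In a triangulated category admitting countable products, every idempotent endomorphism splits. -/

import Mathlib

open CategoryTheory CategoryTheory.Limits CategoryTheory.Pretriangulated

namespace IdemSplitNeeman

section

variable {C : Type u} [Category.{v} C] [Preadditive C] [HasCountableProducts C]

attribute [local instance] HasBinaryBiproducts.of_hasBinaryProducts

variable (X : C) (e : X ⟶ X)

/-- The matrix `[[e, f],[f, e]]` with `f = 1 - e`; an involution conjugating
`diag (e, f)` to `diag (1, 0)`. -/
noncomputable def Mm : X ⊞ X ⟶ X ⊞ X :=
  biprod.lift (biprod.desc e (𝟙 X - e)) (biprod.desc (𝟙 X - e) e)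

noncomputable def Ee : X ⊞ X ⟶ X ⊞ X := biprod.map e (𝟙 X - e)

noncomputable def Gg : X ⊞ X ⟶ X ⊞ X := biprod.map (𝟙 X) (0 : X ⟶ X)

noncomputable abbrev Qq : C := ∏ᶜ (fun _ : ℕ => X ⊞ X)

noncomputable def πq (n : ℕ) : Qq X ⟶ X ⊞ X := Pi.π _ n

noncomputable def Uu : Qq X ⟶ Qq X := Pi.lift fun n => πq X n - πq X (n+1) ≫ Ee X e
noncomputable def Uu' : Qq X ⟶ Qq X := Pi.lift fun n => πq X n - πq X (n+1) ≫ Gg X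
noncomputable def Θq : Qq X ⟶ Qq X := Limits.Pi.map fun _ => Mm X e
noncomputable def α₀ : X ⟶ Qq X := Pi.lift fun _ => biprod.inl
noncomputable def αq : X ⟶ Qq X := Pi.lift fun _ => biprod.lift e (𝟙 X - e)
noncomputable def σq : Qq X ⟶ X := πq X 0 ≫ biprod.fst
noncomputable def ww : Qq X ⟶ Qq X :=
  Pi.lift fun n => biprod.lift (-∑ k ∈ Finset.range n, πq X k ≫ biprod.fst) (πq X n ≫ biprod.snd)

variable {X e}

lemma hMM (he : e ≫ e = e) : Mm X e ≫ Mm X e = 𝟙 (X ⊞ X) := by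
  ext <;> simp [Mm, Preadditive.comp_sub, Preadditive.sub_comp, he]

lemma hEM (he : e ≫ e = e) : Ee X e ≫ Mm X e = Mm X e ≫ Gg X := by
  ext <;> simp [Mm, Ee, Gg, Preadditive.comp_sub, Preadditive.sub_comp, he]

lemma hΘΘ (he : e ≫ e = e) : Θq X e ≫ Θq X e = 𝟙 (Qq X) := by
  ext n <;> simp [Θq, hMM he]

lemma hconj (he : e ≫ e = e) : Θq X e ≫ Uu' X = Uu X e ≫ Θq X e := by
  ext n <;> simp [Θq, Uu, Uu', πq, Preadditive.sub_comp, Preadditive.comp_sub, ← hEM he]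

lemma hα₀Θ : α₀ X ≫ Θq X e = αq X e := by
  ext n <;> simp [α₀, αq, Θq, Mm, πq]

lemma h_α₀σ : α₀ X ≫ σq X = 𝟙 X := by simp [α₀, σq, πq]

lemma h_α₀U' : α₀ X ≫ Uu' X = 0 := by
  ext n
  · simp [α₀, Uu', Gg, πq, Preadditive.comp_sub]
  · simp [α₀, Uu', Gg, πq, Preadditive.comp_sub]

lemma h_wσ : ww X ≫ σq X = 0 := by simp [ww, σq, πq]

lemma h_wU' : ww X ≫ Uu' X = 𝟙 (Qq X) := by
  ext n
  · simp [ww, Uu', Gg, πq, Preadditive.comp_sub, Finset.sum_range_succ]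
  · simp [ww, Uu', Gg, πq, Preadditive.comp_sub]

lemma hU'f (k : ℕ) : Uu' X ≫ πq X k ≫ biprod.fst
    = πq X k ≫ biprod.fst - πq X (k+1) ≫ biprod.fst := by
  simp [Uu', πq, Gg, Preadditive.sub_comp]

lemma h_split : σq X ≫ α₀ X + Uu' X ≫ ww X = 𝟙 (Qq X) := by
  have hwf : ∀ n : ℕ, ww X ≫ πq X n ≫ biprod.fst
      = -∑ k ∈ Finset.range n, πq X k ≫ biprod.fst := by
    intro n; simp [ww, πq]
  ext n
  · have h1 : σq X ≫ α₀ X ≫ πq X n ≫ biprod.fst = πq X 0 ≫ biprod.fst := by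
      simp [σq, α₀, πq]
    have h2 : Uu' X ≫ ww X ≫ πq X n ≫ biprod.fst
        = πq X n ≫ biprod.fst - πq X 0 ≫ biprod.fst := by
      rw [hwf n, Preadditive.comp_neg, Preadditive.comp_sum]
      simp only [hU'f]
      rw [Finset.sum_range_sub' (fun k => πq X k ≫ biprod.fst)]
      abel
    simp only [Preadditive.add_comp, Category.assoc, Category.id_comp, πq] at h1 h2 ⊢
    rw [h1, h2]
    abel
  · simp [ww, Uu', Gg, σq, α₀, πq, Preadditive.comp_sub, Preadditive.sub_comp]

/-- The splitting `Qq X ≅ X ⊞ Qq X` adapted to `Uu'`. -/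
noncomputable def ψsplit : Qq X ≅ X ⊞ Qq X where
  hom := biprod.lift (σq X) (Uu' X)
  inv := biprod.desc (α₀ X) (ww X)
  hom_inv_id := by rw [biprod.lift_desc, h_split]
  inv_hom_id := by
    apply biprod.hom_ext'
    · apply biprod.hom_ext
      · simp [h_α₀σ]
      · simp [h_α₀U']
    · apply biprod.hom_ext
      · simp [h_wσ]
      · simp [h_wU']

lemma h_αψ : α₀ X ≫ (ψsplit (X := X)).hom = biprod.inl := by
  apply biprod.hom_ext
  · simp [ψsplit, h_α₀σ]
  · simp [ψsplit, h_α₀U']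

lemma h_ψsnd : (ψsplit (X := X)).hom ≫ biprod.snd = Uu' X := by simp [ψsplit]

end

section

variable {C : Type u} [Category.{v} C] [Preadditive C] [HasZeroObject C]
    [HasShift C ℤ] [∀ n : ℤ, (shiftFunctor C n).Additive] [Pretriangulated C]
    [HasCountableProducts C]

attribute [local instance] HasBinaryBiproducts.of_hasBinaryProducts

variable (X : C) (e : X ⟶ X)

/-- The candidate triangle `X ⟶ Q ⟶ Q ⟶ X⟦1⟧` for the homotopy limit of the pair of
towers given by `e` and `1 - e`; it is distinguished because it is split. -/
lemma Ttriangle_distinguished (he : e ≫ e = e) :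
    (Triangle.mk (αq X e) (Uu X e) (0 : Qq X ⟶ X⟦(1:ℤ)⟧)) ∈ distTriang C := by
  have hθ : Θq X e ≫ Θq X e = 𝟙 (Qq X) := hΘΘ he
  let θiso : Qq X ≅ Qq X := ⟨Θq X e, Θq X e, hθ, hθ⟩
  let i : Qq X ≅ X ⊞ Qq X := θiso.trans ψsplit
  refine isomorphic_distinguished _ (binaryBiproductTriangle_distinguished X (Qq X)) _ ?_
  refine Triangle.isoMk _ _ (Iso.refl X) i θiso ?_ ?_ (by exact (zero_comp).trans (comp_zero).symm)
  · have h1 : αq X e ≫ Θq X e = α₀ X := by rw [← hα₀Θ, Category.assoc, hθ, Category.comp_id]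
    show αq X e ≫ i.hom = 𝟙 X ≫ biprod.inl
    rw [Category.id_comp]
    dsimp only [i, θiso, Iso.trans_hom]
    rw [← Category.assoc, h1, h_αψ]
  · show Uu X e ≫ θiso.hom = i.hom ≫ biprod.snd
    dsimp only [i, θiso, Iso.trans_hom]
    rw [Category.assoc, h_ψsnd, hconj he]

noncomputable abbrev Pp : C := ∏ᶜ (fun _ : ℕ => X)

noncomputable def pp (n : ℕ) : Pp X ⟶ X := Pi.π _ n

noncomputable def ue : Pp X ⟶ Pp X := Pi.lift fun n => pp X n - pp X (n+1) ≫ e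
noncomputable def uf : Pp X ⟶ Pp X := Pi.lift fun n => pp X n - pp X (n+1) ≫ (𝟙 X - e)

variable {Y Z : C} (gY : Y ⟶ Pp X) (hY : Pp X ⟶ Y⟦(1:ℤ)⟧) (gZ : Z ⟶ Pp X) (hZ : Pp X ⟶ Z⟦(1:ℤ)⟧)

/-- The pair of homotopy-limit triangles for `e` and `1 - e`, as a `Bool`-indexed family. -/
noncomputable def TT : Bool → Triangle C := fun b => match b with
  | true => Triangle.mk gY (ue X e) hY
  | false => Triangle.mk gZ (uf X e) hZ

noncomputable def ρ2 : Qq X ⟶ ∏ᶜ (fun b => (TT X e gY hY gZ hZ b).obj₂) :=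
  Pi.lift fun b => match b with
  | true => Limits.Pi.map fun _ : ℕ => (biprod.fst : X ⊞ X ⟶ X)
  | false => Limits.Pi.map fun _ : ℕ => (biprod.snd : X ⊞ X ⟶ X)

noncomputable def ρ2inv : (∏ᶜ (fun b => (TT X e gY hY gZ hZ b).obj₂)) ⟶ Qq X :=
  Pi.lift fun n => biprod.lift (Pi.π _ true ≫ pp X n) (Pi.π _ false ≫ pp X n)

noncomputable def ρ3 : Qq X ⟶ ∏ᶜ (fun b => (TT X e gY hY gZ hZ b).obj₃) :=
  Pi.lift fun b => match b with
  | true => Limits.Pi.map fun _ : ℕ => (biprod.fst : X ⊞ X ⟶ X)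
  | false => Limits.Pi.map fun _ : ℕ => (biprod.snd : X ⊞ X ⟶ X)

@[simp] lemma TT_true : TT X e gY hY gZ hZ true = Triangle.mk gY (ue X e) hY := rfl
@[simp] lemma TT_false : TT X e gY hY gZ hZ false = Triangle.mk gZ (uf X e) hZ := rfl
@[simp] lemma ρ2_true : ρ2 X e gY hY gZ hZ ≫ Pi.π _ true
    = Limits.Pi.map fun _ : ℕ => (biprod.fst : X ⊞ X ⟶ X) := limit.lift_π _ _
@[simp] lemma ρ2_false : ρ2 X e gY hY gZ hZ ≫ Pi.π _ false
    = Limits.Pi.map fun _ : ℕ => (biprod.snd : X ⊞ X ⟶ X) := limit.lift_π _ _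
@[simp] lemma ρ3_true : ρ3 X e gY hY gZ hZ ≫ Pi.π _ true
    = Limits.Pi.map fun _ : ℕ => (biprod.fst : X ⊞ X ⟶ X) := limit.lift_π _ _
@[simp] lemma ρ3_false : ρ3 X e gY hY gZ hZ ≫ Pi.π _ false
    = Limits.Pi.map fun _ : ℕ => (biprod.snd : X ⊞ X ⟶ X) := limit.lift_π _ _

lemma hρ2a : ρ2 X e gY hY gZ hZ ≫ ρ2inv X e gY hY gZ hZ = 𝟙 (Qq X) := by
  ext n <;> simp [ρ2inv, πq, pp] <;> erw [ρ2, Pi.lift_π_assoc] <;> exact Pi.map_π _ _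

lemma hρ2b : ρ2inv X e gY hY gZ hZ ≫ ρ2 X e gY hY gZ hZ = 𝟙 _ := by
  ext b
  cases b <;>
  · rw [Category.assoc]
    refine limit.hom_ext fun ⟨n⟩ => ?_
    erw [ρ2, Pi.lift_π]
    simp [ρ2inv, pp]
    erw [Category.assoc, Pi.map_π, Pi.lift_π_assoc]
    simp
    erw [Category.id_comp]
    rfl

noncomputable def ρ3inv : (∏ᶜ (fun b => (TT X e gY hY gZ hZ b).obj₃)) ⟶ Qq X :=
  Pi.lift fun n => biprod.lift (Pi.π _ true ≫ pp X n) (Pi.π _ false ≫ pp X n)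

lemma hρ3a : ρ3 X e gY hY gZ hZ ≫ ρ3inv X e gY hY gZ hZ = 𝟙 (Qq X) := by
  ext n <;> simp [ρ3inv, πq, pp] <;> erw [ρ3, Pi.lift_π_assoc] <;> exact Pi.map_π _ _

lemma hρ3b : ρ3inv X e gY hY gZ hZ ≫ ρ3 X e gY hY gZ hZ = 𝟙 _ := by
  ext b
  cases b <;>
  · rw [Category.assoc]
    refine limit.hom_ext fun ⟨n⟩ => ?_
    erw [ρ3, Pi.lift_π]
    simp [ρ3inv, pp]
    erw [Category.assoc, Pi.map_π, Pi.lift_π_assoc]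
    simp
    erw [Category.id_comp]
    rfl

lemma hsquare : Uu X e ≫ ρ3 X e gY hY gZ hZ
    = ρ2 X e gY hY gZ hZ ≫ (productTriangle (TT X e gY hY gZ hZ)).mor₂ := by
  ext b
  cases b <;>
  · rw [Category.assoc, productTriangle_mor₂]
    erw [Category.assoc, Pi.map_π, ρ3, Pi.lift_π, ρ2, Pi.lift_π_assoc]
    refine limit.hom_ext fun ⟨n⟩ => ?_
    simp [ρ2, Uu, ue, uf, Ee, πq, pp, Preadditive.sub_comp, Preadditive.comp_sub]
    erw [Category.assoc, Category.assoc, Pi.map_π, Pi.lift_π_assoc, Pi.lift_π]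
    simp [Preadditive.sub_comp, Preadditive.comp_sub]
    repeat erw [Preadditive.comp_sub]
    repeat erw [Pi.map_π]
    repeat erw [Pi.map_π_assoc]

end

end IdemSplitNeeman

open IdemSplitNeeman in
/-- In a triangulated category admitting countable products,
every idempotent endomorphism splits. -/
theorem idempotents_split_in_triangulated_with_countable_products
    {C : Type u} [Category.{v} C] [Preadditive C] [HasZeroObject C]
    [HasShift C ℤ] [∀ n : ℤ, (shiftFunctor C n).Additive] [Pretriangulated C]
    [IsTriangulated C] [HasCountableProducts C]
    (X : C) (e : X ⟶ X) (he : e ≫ e = e) :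
    ∃ (Y : C) (f : X ⟶ Y) (g : Y ⟶ X), f ≫ g = e ∧ g ≫ f = 𝟙 Y := by
  have := HasBinaryBiproducts.of_hasBinaryProducts (C := C)
  -- the homotopy limit triangles of the towers `(X, e)` and `(X, 1 - e)`
  obtain ⟨Y, gY, hY, hTY⟩ := distinguished_cocone_triangle₁ (ue X e)
  obtain ⟨Z, gZ, hZ, hTZ⟩ := distinguished_cocone_triangle₁ (uf X e)
  have hT2 : productTriangle (TT X e gY hY gZ hZ) ∈ distTriang C := by
    apply productTriangle_distinguished
    rintro (_ | _)
    · exact hTZ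
    · exact hTY
  have hT : (Triangle.mk (αq X e) (Uu X e) (0 : Qq X ⟶ X⟦(1:ℤ)⟧)) ∈ distTriang C :=
    Ttriangle_distinguished X e he
  obtain ⟨φ, hφ1, hφ3⟩ := complete_distinguished_triangle_morphism₁
    (Triangle.mk (αq X e) (Uu X e) (0 : Qq X ⟶ X⟦(1:ℤ)⟧)) (productTriangle (TT X e gY hY gZ hZ))
    hT hT2 (ρ2 X e gY hY gZ hZ) (ρ3 X e gY hY gZ hZ) (hsquare X e gY hY gZ hZ)
  have hφ1' : αq X e ≫ ρ2 X e gY hY gZ hZ = φ ≫ (productTriangle (TT X e gY hY gZ hZ)).mor₁ :=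
    hφ1
  -- the completed map `φ : X ⟶ Y ⨯ Z` is an isomorphism
  haveI : IsIso (ρ2 X e gY hY gZ hZ) :=
    ⟨ρ2inv X e gY hY gZ hZ, hρ2a X e gY hY gZ hZ, hρ2b X e gY hY gZ hZ⟩
  haveI : IsIso (ρ3 X e gY hY gZ hZ) :=
    ⟨ρ3inv X e gY hY gZ hZ, hρ3a X e gY hY gZ hZ, hρ3b X e gY hY gZ hZ⟩
  have hiso : IsIso (φ : X ⟶ _) := by
    have := isIso₁_of_isIso₂₃
      (Triangle.homMk (Triangle.mk (αq X e) (Uu X e) (0 : Qq X ⟶ X⟦(1:ℤ)⟧))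
        (productTriangle (TT X e gY hY gZ hZ)) φ (ρ2 X e gY hY gZ hZ) (ρ3 X e gY hY gZ hZ)
        hφ1 (hsquare X e gY hY gZ hZ) hφ3) hT hT2 ‹IsIso (ρ2 X e gY hY gZ hZ)› ‹IsIso (ρ3 X e gY hY gZ hZ)›
    exact this
  -- the splitting maps
  let πY : (productTriangle (TT X e gY hY gZ hZ)).obj₁ ⟶ Y :=
    Pi.π (fun b => (TT X e gY hY gZ hZ b).obj₁) true
  let πZ : (productTriangle (TT X e gY hY gZ hZ)).obj₁ ⟶ Z :=
    Pi.π (fun b => (TT X e gY hY gZ hZ b).obj₁) false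
  let ιY : Y ⟶ (productTriangle (TT X e gY hY gZ hZ)).obj₁ :=
    Pi.lift fun b => match b with
      | true => 𝟙 Y
      | false => (0 : Y ⟶ Z)
  have hιπ : ιY ≫ πY = 𝟙 Y := by simp only [ιY, πY]; erw [Pi.lift_π]
  have hιπ' : ιY ≫ πZ = 0 := by simp only [ιY, πZ]; erw [Pi.lift_π]
  let k : (productTriangle (TT X e gY hY gZ hZ)).obj₁ ⟶ X := @inv _ _ _ _ φ hiso
  have hkα : k ≫ αq X e = (productTriangle (TT X e gY hY gZ hZ)).mor₁
      ≫ ρ2inv X e gY hY gZ hZ := by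
    have : k ≫ αq X e ≫ ρ2 X e gY hY gZ hZ = (productTriangle (TT X e gY hY gZ hZ)).mor₁ := by
      rw [hφ1']
      simp only [k]
      erw [← Category.assoc, @IsIso.inv_hom_id _ _ _ _ φ hiso, Category.id_comp]
    rw [← this]
    erw [Category.assoc, Category.assoc]
    erw [hρ2a X e gY hY gZ hZ, Category.comp_id]
  have hc1 : αq X e ≫ πq X 0 ≫ biprod.fst = e := by simp [αq, πq]
  have hc1' : αq X e ≫ πq X 0 ≫ biprod.snd = 𝟙 X - e := by simp [αq, πq]
  have hc2 : ρ2inv X e gY hY gZ hZ ≫ πq X 0 ≫ biprod.fst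
      = Pi.π (fun b => (TT X e gY hY gZ hZ b).obj₂) true ≫ pp X 0 := by
    simp [ρ2inv, πq]
  have hc2' : ρ2inv X e gY hY gZ hZ ≫ πq X 0 ≫ biprod.snd
      = Pi.π (fun b => (TT X e gY hY gZ hZ b).obj₂) false ≫ pp X 0 := by
    simp [ρ2inv, πq]
  have hc3 : (productTriangle (TT X e gY hY gZ hZ)).mor₁
      ≫ Pi.π (fun b => (TT X e gY hY gZ hZ b).obj₂) true = πY ≫ gY := by
    simp only [πY, productTriangle_mor₁]; erw [Pi.map_π]; rfl
  have hc3' : (productTriangle (TT X e gY hY gZ hZ)).mor₁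
      ≫ Pi.π (fun b => (TT X e gY hY gZ hZ b).obj₂) false = πZ ≫ gZ := by
    simp only [πZ, productTriangle_mor₁]; erw [Pi.map_π]; rfl
  have hke : k ≫ e = πY ≫ (gY ≫ pp X 0) := by
    have h : k ≫ (αq X e ≫ πq X 0 ≫ biprod.fst) = πY ≫ (gY ≫ pp X 0) := by
      erw [← Category.assoc, hkα, Category.assoc, hc2, ← Category.assoc, hc3,
        Category.assoc]
      rfl
    rw [hc1] at h
    exact h
  have hkf : k ≫ (𝟙 X - e) = πZ ≫ (gZ ≫ pp X 0) := by
    have h : k ≫ (αq X e ≫ πq X 0 ≫ biprod.snd) = πZ ≫ (gZ ≫ pp X 0) := by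
      erw [← Category.assoc, hkα, Category.assoc, hc2', ← Category.assoc, hc3',
        Category.assoc]
      rfl
    rw [hc1'] at h
    exact h
  have hsum : k = k ≫ e + k ≫ (𝟙 X - e) := by
    rw [← Preadditive.comp_add]
    simp
  have hgk : ιY ≫ k = gY ≫ pp X 0 := by
    conv_lhs => rw [hsum]
    rw [Preadditive.comp_add, hke, hkf]
    simp only [← Category.assoc]
    rw [hιπ, hιπ']
    simp
  refine ⟨Y, φ ≫ πY, ιY ≫ k, ?_, ?_⟩
  · erw [Category.assoc, hgk, ← hke, ← Category.assoc]
    erw [@IsIso.hom_inv_id _ _ _ _ φ hiso, Category.id_comp]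
  · rw [Category.assoc]
    rw [show k ≫ φ ≫ πY = πY from by erw [← Category.assoc]; erw [@IsIso.inv_hom_id _ _ _ _ φ hiso, Category.id_comp]]
    exact hιπ
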